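/- Let G be a single-decision causal influence diagram and X a variable of G other than the decision D. Then G is compatible with a control incentive on X if and only if G contains a directed path from the decision D to some utility node U that passes through X, i.e. a path of the form D ⇝ X ⇝ U. -/

import Mathlib

attribute [local instance] Classical.propDecidable

noncomputable section

/-! ### d-separation in a directed graph -/

/-- `b` is a collider on a path segment `a - b - c`. -/
def IsCollider {V : Type} (E : V → V → Prop) (a b c : V) : Prop := E a b ∧ E c b

/-- The triple `a - b - c` on an undirected path blocks the path w.r.t. `Z`:
either the middle node is a non-collider (chain or fork) belonging to `Z`, or it is a
collider such that neither it nor any of its descendants belongs to `Z`. -/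
def BlockedTriple {V : Type} (E : V → V → Prop) (Z : Set V) (a b c : V) : Prop :=
  (¬ IsCollider E a b c ∧ b ∈ Z) ∨
    (IsCollider E a b c ∧ ∀ w, Relation.ReflTransGen E b w → w ∉ Z)

/-- An undirected path: a nonempty list of distinct vertices in which consecutive
vertices are joined by an edge in one direction or the other. -/
def IsUPath {V : Type} (E : V → V → Prop) (p : List V) : Prop :=
  p ≠ [] ∧ p.Nodup ∧ p.Chain' (fun a b => E a b ∨ E b a)

/-- A path is d-separated (blocked) by `Z` if some consecutive triple blocks it. -/
def BlockedPath {V : Type} (E : V → V → Prop) (Z : Set V) (p : List V) : Prop :=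
  ∃ l₁ a b c l₂, p = l₁ ++ a :: b :: c :: l₂ ∧ BlockedTriple E Z a b c

/-- `Z` d-separates the node sets `S` and `T`: every undirected path from a node of `S`
to a node of `T` is blocked by `Z`. -/
def DSep {V : Type} (E : V → V → Prop) (S T Z : Set V) : Prop :=
  ∀ p : List V, IsUPath E p → (∃ s ∈ S, p.head? = some s) →
    (∃ t ∈ T, p.getLast? = some t) → BlockedPath E Z p

/-! ### Causal influence diagrams and structural causal influence models -/

/-- A single-decision causal influence diagram: a finite DAG whose vertices are
partitioned into structure nodes, one decision node and utility nodes
(the utility nodes having no children). -/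
structure CID (V : Type) where
  edge : V → V → Prop
  acyclic : ∀ v, ¬ Relation.TransGen edge v v
  decision : V
  utility : Finset V
  decision_not_utility : decision ∉ utility
  utility_no_children : ∀ u ∈ utility, ∀ v, ¬ edge u v

/-- A (single-decision) structural causal influence model over a CID: finite nonempty
domains for every variable, one finite-domain exogenous variable per variable, structural
functions for every non-decision variable, real-valued (injectively embedded, i.e. the
domain is a subset of ℝ) utility variables, and mutually independent exogenous
distributions. -/
structure SCIM (V : Type) extends CID V where
  dom : V → Type
  dom_fintype : ∀ v, Fintype (dom v)
  dom_nonempty : ∀ v, Nonempty (dom v)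
  edom : V → Type
  edom_fintype : ∀ v, Fintype (edom v)
  edom_nonempty : ∀ v, Nonempty (edom v)
  utilVal : ∀ v, dom v → ℝ
  utilVal_inj : ∀ v ∈ utility, Function.Injective (utilVal v)
  f : ∀ v, v ≠ decision → (∀ w, edge w v → dom w) → edom v → dom v
  μ : ∀ v, edom v → ℝ
  μ_nonneg : ∀ v e, 0 ≤ μ v e
  μ_sum : ∀ v, ∑ e ∈ @Finset.univ (edom v) (edom_fintype v), μ v e = 1

variable {V : Type} [Fintype V] [DecidableEq V]

instance (M : SCIM V) (v : V) : Fintype (M.dom v) := M.dom_fintype v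
instance (M : SCIM V) (v : V) : Nonempty (M.dom v) := M.dom_nonempty v
instance (M : SCIM V) (v : V) : Fintype (M.edom v) := M.edom_fintype v
instance (M : SCIM V) (v : V) : Nonempty (M.edom v) := M.edom_nonempty v

namespace SCIM

variable (M : SCIM V)

/-- A joint setting of the exogenous variables. -/
abbrev Env := ∀ v, M.edom v

/-- Joint probability of an exogenous setting (the exogenous variables are independent). -/
def prob (ε : M.Env) : ℝ := ∏ v, M.μ v (ε v)

/-- The type of structural mechanisms for the vertex `v`. -/
def Mechanism (v : V) : Type := (∀ w, M.edge w v → M.dom w) → M.edom v → M.dom v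

/-- A policy: a structural function for the decision node. -/
abbrev Policy := M.Mechanism M.decision

theorem edge_wf : WellFounded M.edge := by
  haveI : IsTrans V (Relation.TransGen M.edge) := ⟨fun _ _ _ h h' => h.trans h'⟩
  haveI : IsIrrefl V (Relation.TransGen M.edge) := ⟨M.acyclic⟩
  exact Subrelation.wf (fun h => Relation.TransGen.single h)
    (Finite.wellFounded_of_trans_of_irrefl _)

/-- The unique solution of the structural equations `mech` given exogenous setting `ε`. -/
def solve (mech : ∀ v, M.Mechanism v) (ε : M.Env) : ∀ v, M.dom v :=
  WellFounded.fix (C := fun v => M.dom v) M.edge_wf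
    (fun v IH => mech v (fun w hw => IH w hw) (ε v))

/-- The mechanisms of the SCM `M_π` obtained by fixing the policy `π`. -/
def polMech (π : M.Policy) : ∀ v, M.Mechanism v :=
  fun v => if h : v = M.decision then cast (congrArg M.Mechanism h).symm π else M.f v h

/-- Apply an intervention (a partial assignment `ι` of values) to mechanisms:
intervened variables are set to constants. -/
def doMech (mech : ∀ v, M.Mechanism v) (ι : ∀ v, Option (M.dom v)) : ∀ v, M.Mechanism v :=
  fun v => match ι v with
    | some x => fun _ _ => x
    | none => mech v

/-- The single intervention `do(X = x)` as a partial assignment. -/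
def single (X : V) (x : M.dom X) : ∀ v, Option (M.dom v) :=
  fun v => if h : v = X then some (cast (congrArg M.dom h).symm x) else none

/-- The value `W(ε)` of each variable in `M_π`. -/
def val (π : M.Policy) (ε : M.Env) : ∀ v, M.dom v := M.solve (M.polMech π) ε

/-- The potential response: the value of each variable in the submodel of `M_π`
given by the intervention `ι`. -/
def valDo (π : M.Policy) (ι : ∀ v, Option (M.dom v)) (ε : M.Env) : ∀ v, M.dom v :=
  M.solve (M.doMech (M.polMech π) ι) ε

/-- Total utility of an assignment of values to the variables. -/
def totUtil (a : ∀ v, M.dom v) : ℝ := ∑ v ∈ M.utility, M.utilVal v (a v)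

/-- Expected total utility of the policy `π`. -/
def EU (π : M.Policy) : ℝ := ∑ ε : M.Env, M.prob ε * M.totUtil (M.val π ε)

/-- An optimal policy maximizes expected total utility. -/
def Optimal (π : M.Policy) : Prop := ∀ π' : M.Policy, M.EU π' ≤ M.EU π

/-- A decision context: a joint value of the parents of the decision. -/
abbrev Ctx := ∀ w, M.edge w M.decision → M.dom w

/-- The decision context realized by the exogenous setting `ε` in `M_π`. -/
def ctx (π : M.Policy) (ε : M.Env) : M.Ctx := fun w _ => M.val π ε w

/-- Probability of a decision context in `M_π`. -/
def ctxProb (π : M.Policy) (pa : M.Ctx) : ℝ :=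
  ∑ ε : M.Env, if M.ctx π ε = pa then M.prob ε else 0

/-- Conditional expectation of `g` given the decision context `pa` in `M_π`. -/
def condExp (π : M.Policy) (pa : M.Ctx) (g : M.Env → ℝ) : ℝ :=
  (∑ ε : M.Env, if M.ctx π ε = pa then M.prob ε * g ε else 0) / M.ctxProb π pa

/-- The nested potential response `𝒰_{X_d}(ε)`: total utility when `X` is set to the
value it would take under `do(D = d)`, everything else following `M_π`. -/
def nestedU (π : M.Policy) (X : V) (d : M.dom M.decision) (ε : M.Env) : ℝ :=
  M.totUtil (M.valDo π (M.single X (M.valDo π (M.single M.decision d) ε X)) ε)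

/-- Control incentive on `X`: under every optimal policy, in some positive-probability
decision context some alternative decision `d` changes expected utility through `X`. -/
def ControlIncentive (X : V) : Prop :=
  ∀ π : M.Policy, M.Optimal π →
    ∃ pa : M.Ctx, 0 < M.ctxProb π pa ∧ ∃ d : M.dom M.decision,
      M.condExp π pa (M.nestedU π X d) ≠
        M.condExp π pa (fun ε => M.totUtil (M.val π ε))

/-- Response incentive on `X`: under every optimal policy some intervention on `X`
changes the decision for some exogenous setting. -/
def ResponseIncentive (X : V) : Prop :=
  ∀ π : M.Policy, M.Optimal π →
    ∃ (x : M.dom X) (ε : M.Env),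
      M.valDo π (M.single X x) ε M.decision ≠ M.val π ε M.decision

/-- Conditional probability of `event` given `cond` in `M_π`. -/
def cprob (π : M.Policy) (event cond : M.Env → Prop) : ℝ :=
  (∑ ε : M.Env, if cond ε ∧ event ε then M.prob ε else 0) /
    (∑ ε : M.Env, if cond ε then M.prob ε else 0)

/-- Counterfactual fairness of a policy `π` with respect to a protected attribute `A`:
conditional on any positive-probability decision context and value of `A`, intervening
on `A` does not change the distribution of the decision. -/
def CFair (π : M.Policy) (A : V) : Prop :=
  ∀ (d : M.dom M.decision) (pa : M.Ctx) (a a' : M.dom A),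
    (0 < ∑ ε : M.Env, if M.ctx π ε = pa ∧ M.val π ε A = a then M.prob ε else 0) →
      M.cprob π (fun ε => M.valDo π (M.single A a') ε M.decision = d)
          (fun ε => M.ctx π ε = pa ∧ M.val π ε A = a) =
        M.cprob π (fun ε => M.val π ε M.decision = d)
          (fun ε => M.ctx π ε = pa ∧ M.val π ε A = a)

/-- Expected value of the sum of utility variables in `S`. -/
def EUOn (S : Finset V) (π : M.Policy) : ℝ :=
  ∑ ε : M.Env, M.prob ε * ∑ v ∈ S, M.utilVal v (M.val π ε v)

/-- The policy obtained from `π` by replacing the observations of the decision-parents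
that are descendants of `X` by the fixed values `p`. -/
def modPolicy (π : M.Policy) (X : V) (p : M.Ctx) : M.Policy :=
  fun pa e =>
    π (fun w hw => if Relation.ReflTransGen M.edge X w then p w hw else pa w hw) e

end SCIM

/-- The graphical criterion for control incentives: a directed path `D ⇝ X ⇝ U`
for some utility node `U`. -/
def CICriterion {V : Type} (G : CID V) (X : V) : Prop :=
  Relation.ReflTransGen G.edge G.decision X ∧
    ∃ u ∈ G.utility, Relation.ReflTransGen G.edge X u

/-- The graphical criterion for response incentives: a directed path from `X` to some
parent `W` of the decision `D`, a directed path from `D` to some utility node `U`, and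
`W` d-connected to `U` given `({D} ∪ Pa_D) \ {W}`. -/
def RICriterion {V : Type} (G : CID V) (X : V) : Prop :=
  ∃ W, G.edge W G.decision ∧ ∃ u ∈ G.utility,
    Relation.ReflTransGen G.edge X W ∧
    Relation.ReflTransGen G.edge G.decision u ∧
    ¬ DSep G.edge {W} {u} (({G.decision} ∪ {w | G.edge w G.decision}) \ {W})

end

section AuxLemmas

attribute [local instance] Classical.propDecidable

noncomputable section

namespace SCIM

variable {V : Type} [Fintype V] [DecidableEq V] (M : SCIM V)

theorem solve_eq (m : ∀ v, M.Mechanism v) (ε : M.Env) (v : V) :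
    M.solve m ε v = m v (fun w _ => M.solve m ε w) (ε v) := by
  unfold solve
  exact WellFounded.fix_eq _ _ _

theorem solve_congr {m m' : ∀ v, M.Mechanism v} (ε : M.Env) (v : V)
    (h : ∀ w, Relation.ReflTransGen M.edge w v → m w = m' w) :
    M.solve m ε v = M.solve m' ε v := by
  refine M.edge_wf.induction
    (C := fun v => (∀ w, Relation.ReflTransGen M.edge w v → m w = m' w) →
      M.solve m ε v = M.solve m' ε v) v ?_ h
  intro v IH h
  have hp : (fun w (_ : M.edge w v) => M.solve m ε w)
      = (fun w (_ : M.edge w v) => M.solve m' ε w) := by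
    funext w hw
    exact IH w hw (fun z hz => h z (hz.trans (Relation.ReflTransGen.single hw)))
  rw [M.solve_eq, M.solve_eq, hp, h v Relation.ReflTransGen.refl]

theorem doMech_single_self (m : ∀ v, M.Mechanism v) (X : V) (x : M.dom X) :
    M.doMech m (M.single X x) X = fun _ _ => x := by
  simp [doMech, single, cast_eq]
  rfl

theorem doMech_single_ne (m : ∀ v, M.Mechanism v) {X v : V} (x : M.dom X) (h : v ≠ X) :
    M.doMech m (M.single X x) v = m v := by
  simp [doMech, single, h]

theorem polMech_ne (π : M.Policy) {v : V} (h : v ≠ M.decision) :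
    M.polMech π v = M.f v h := by
  simp [polMech, h]
  rfl

theorem polMech_self (π : M.Policy) :
    M.polMech π M.decision = π := by
  simp [polMech, cast_eq]

/-- Consistency: intervening on `X` with its natural value changes nothing. -/
theorem solve_do_self (m : ∀ v, M.Mechanism v) (ε : M.Env) (X : V) (v : V) :
    M.solve (M.doMech m (M.single X (M.solve m ε X))) ε v = M.solve m ε v := by
  refine M.edge_wf.induction
    (C := fun v => M.solve (M.doMech m (M.single X (M.solve m ε X))) ε v = M.solve m ε v)
    v ?_
  intro v IH
  by_cases hvX : v = X
  · subst hvX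
    rw [M.solve_eq, M.doMech_single_self]
  · rw [M.solve_eq, M.doMech_single_ne m _ hvX]
    conv_rhs => rw [M.solve_eq]
    congr 1
    funext w hw
    exact IH w hw

/-- Locality: intervening on `X` does not change non-descendants of `X`. -/
theorem valDo_not_desc (π : M.Policy) {X : V} (x : M.dom X) (ε : M.Env) {w : V}
    (h : ¬ Relation.ReflTransGen M.edge X w) :
    M.valDo π (M.single X x) ε w = M.val π ε w := by
  refine M.solve_congr ε w ?_
  intro a ha
  have haX : a ≠ X := fun e => h (e ▸ ha)
  exact M.doMech_single_ne _ _ haX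

theorem exists_optimal : ∃ π : M.Policy, M.Optimal π := by
  haveI : Finite M.Policy := by
    unfold Policy Mechanism
    infer_instance
  haveI : Nonempty M.Policy := ⟨fun _ _ => Classical.arbitrary _⟩
  obtain ⟨π, hπ⟩ := Finite.exists_max M.EU
  exact ⟨π, hπ⟩

end SCIM

end

end AuxLemmas
/-- The boolean SCIM over a CID: every domain is `Bool`, every non-decision variable is
the conjunction of its parents, utilities are `0/1`, exogenous variables are trivial. -/
noncomputable def CID.boolSCIM {V : Type} [Fintype V] [DecidableEq V] (G : CID V) : SCIM V where
  toCID := G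
  dom _ := Bool
  dom_fintype _ := inferInstance
  dom_nonempty _ := inferInstance
  edom _ := Unit
  edom_fintype _ := inferInstance
  edom_nonempty _ := inferInstance
  utilVal _ b := if b then 1 else 0
  utilVal_inj v _ a b h := by
    cases a <;> cases b <;> simp_all
  f v _ pa _ := if ∀ w (hw : G.edge w v), pa w hw = true then true else false
  μ _ _ := 1
  μ_nonneg _ _ := zero_le_one
  μ_sum v := by simp

namespace CID

variable {V : Type} [Fintype V] [DecidableEq V] (G : CID V)

theorem boolSCIM_f_eq_false {v : V} (h : v ≠ (G.boolSCIM).decision)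
    (pa : ∀ w, G.edge w v → Bool) (e : Unit)
    (hw : ¬ ∀ w (hw : G.edge w v), pa w hw = true) :
    (G.boolSCIM).f v h pa e = false := by
  simp only [CID.boolSCIM]
  rw [if_neg hw]

theorem boolSCIM_f_eq_true {v : V} (h : v ≠ (G.boolSCIM).decision)
    (pa : ∀ w, G.edge w v → Bool) (e : Unit)
    (hw : ∀ w (hw : G.edge w v), pa w hw = true) :
    (G.boolSCIM).f v h pa e = true := by
  simp only [CID.boolSCIM]
  rw [if_pos hw]

/-- False propagates along directed paths of conjunction mechanisms. -/
theorem bool_false (m : ∀ v, (G.boolSCIM).Mechanism v) (ε : (G.boolSCIM).Env) (v : V)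
    (hAND : ∀ z, Relation.TransGen G.edge v z →
      ∃ hz : z ≠ (G.boolSCIM).decision, m z = (G.boolSCIM).f z hz)
    (hv : (G.boolSCIM).solve m ε v = false) :
    ∀ w, Relation.ReflTransGen G.edge v w → (G.boolSCIM).solve m ε w = false := by
  intro w hw
  induction hw with
  | refl => exact hv
  | @tail b c hab hbc IH =>
    obtain ⟨hzd, hm⟩ := hAND c (Relation.TransGen.tail' hab hbc)
    rw [SCIM.solve_eq, hm]
    refine G.boolSCIM_f_eq_false hzd _ _ ?_
    intro hall
    have := hall b hbc
    rw [IH] at this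
    exact Bool.false_ne_true this

/-- If the decision variable is true and all other mechanisms are conjunctions,
everything is true. -/
theorem bool_true (m : ∀ v, (G.boolSCIM).Mechanism v) (ε : (G.boolSCIM).Env)
    (hAND : ∀ z, (hz : z ≠ (G.boolSCIM).decision) → m z = (G.boolSCIM).f z hz)
    (hD : (G.boolSCIM).solve m ε (G.boolSCIM).decision = true) :
    ∀ v, (G.boolSCIM).solve m ε v = true := by
  intro v
  refine (G.boolSCIM).edge_wf.induction
    (C := fun v => (G.boolSCIM).solve m ε v = true) v ?_
  intro v IH
  by_cases h : v = (G.boolSCIM).decision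
  · exact h ▸ hD
  · rw [SCIM.solve_eq, hAND v h]
    exact G.boolSCIM_f_eq_true h _ _ (fun w hw => IH w hw)

end CID
namespace CID

variable {V : Type} [Fintype V] [DecidableEq V] (G : CID V)

noncomputable instance : Unique ((G.boolSCIM).Env) :=
  ⟨⟨fun _ => ()⟩, fun ε => funext fun v => rfl⟩

theorem boolSCIM_prob (ε : (G.boolSCIM).Env) : (G.boolSCIM).prob ε = 1 := by
  unfold SCIM.prob
  simp [CID.boolSCIM]

theorem boolSCIM_utilVal_true (v : V) : (G.boolSCIM).utilVal v true = 1 := by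
  simp [CID.boolSCIM]

theorem boolSCIM_utilVal_false (v : V) : (G.boolSCIM).utilVal v false = 0 := by
  simp [CID.boolSCIM]

theorem boolSCIM_utility : (G.boolSCIM).utility = G.utility := rfl

theorem boolSCIM_totUtil_true (a : ∀ v, (G.boolSCIM).dom v) (h : ∀ v, a v = true) :
    (G.boolSCIM).totUtil a = G.utility.card := by
  unfold SCIM.totUtil
  rw [boolSCIM_utility]
  rw [Finset.sum_congr rfl (fun v _ => by rw [h v, boolSCIM_utilVal_true])]
  simp

theorem boolSCIM_totUtil_lt (a : ∀ v, (G.boolSCIM).dom v) {u : V}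
    (hu : u ∈ G.utility) (ha : a u = false) :
    (G.boolSCIM).totUtil a < G.utility.card := by
  unfold SCIM.totUtil
  rw [boolSCIM_utility]
  have hcard : ((G.utility.card : ℝ)) = ∑ _v ∈ G.utility, (1 : ℝ) := by simp
  rw [hcard]
  refine Finset.sum_lt_sum (fun v _ => ?_) ⟨u, hu, ?_⟩
  · cases hv2 : a v
    · rw [boolSCIM_utilVal_false]; norm_num
    · rw [boolSCIM_utilVal_true]
  · rw [ha, boolSCIM_utilVal_false]; norm_num

theorem boolSCIM_EU (π : (G.boolSCIM).Policy) :
    (G.boolSCIM).EU π = (G.boolSCIM).totUtil ((G.boolSCIM).val π default) := by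
  unfold SCIM.EU
  rw [Fintype.sum_unique, boolSCIM_prob, one_mul]

theorem boolSCIM_ctxProb (π : (G.boolSCIM).Policy) :
    (G.boolSCIM).ctxProb π ((G.boolSCIM).ctx π default) = 1 := by
  unfold SCIM.ctxProb
  rw [Fintype.sum_unique, if_pos rfl, boolSCIM_prob]

theorem boolSCIM_condExp (π : (G.boolSCIM).Policy) (g : (G.boolSCIM).Env → ℝ) :
    (G.boolSCIM).condExp π ((G.boolSCIM).ctx π default) g = g default := by
  unfold SCIM.condExp
  rw [Fintype.sum_unique, if_pos rfl, boolSCIM_prob, boolSCIM_ctxProb, one_mul, div_one]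

end CID

/-- **Control incentive graphical criterion** (Theorem: soundness and completeness).
A single-decision CID `G` is compatible with a control incentive on a variable `X ≠ D`
iff `G` has a directed path `D ⇝ X ⇝ U` to some utility node `U`. -/
theorem control_incentive_graphical_criterion
    {V : Type} [Fintype V] [DecidableEq V] (G : CID V) (X : V) (hX : X ≠ G.decision) :
    (∃ M : SCIM V, M.toCID = G ∧ M.ControlIncentive X) ↔ CICriterion G X := by
  constructor
  · -- Soundness: a control incentive implies the criterion.
    rintro ⟨M, rfl, hCI⟩
    by_contra hcrit
    rw [CICriterion] at hcrit
    push_neg at hcrit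
    obtain ⟨π, hopt⟩ := M.exists_optimal
    obtain ⟨pa, hpa, d, hne⟩ := hCI π hopt
    refine hne (congrArg (M.condExp π pa) (funext fun ε => ?_))
    by_cases hDX : Relation.ReflTransGen M.edge M.decision X
    · -- no directed path from X to any utility node
      have hXu := hcrit hDX
      unfold SCIM.nestedU SCIM.totUtil
      refine Finset.sum_congr rfl (fun v hv => ?_)
      rw [M.valDo_not_desc π _ ε (hXu v hv)]
    · -- no directed path from the decision to X
      unfold SCIM.nestedU
      rw [M.valDo_not_desc π d ε hDX]
      unfold SCIM.valDo SCIM.val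
      exact congrArg M.totUtil (funext fun v => M.solve_do_self (M.polMech π) ε X v)
  · -- Completeness: the criterion implies a control incentive in the boolean model.
    rintro ⟨hDX, u, hu, hXu⟩
    refine ⟨G.boolSCIM, rfl, ?_⟩
    intro π hopt
    have hAND0 : ∀ z, (hz : z ≠ (G.boolSCIM).decision) →
        (G.boolSCIM).polMech π z = (G.boolSCIM).f z hz :=
      fun z hz => (G.boolSCIM).polMech_ne π hz
    -- Step 1: under an optimal policy the decision takes value `true`.
    have hDtrue : (G.boolSCIM).val π default (G.boolSCIM).decision = true := by
      by_contra hD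
      have hDf : (G.boolSCIM).val π default (G.boolSCIM).decision = false := by
        cases hval : (G.boolSCIM).val π default (G.boolSCIM).decision
        · rfl
        · exact absurd hval hD
      have hu_false : (G.boolSCIM).val π default u = false := by
        refine G.bool_false ((G.boolSCIM).polMech π) default (G.boolSCIM).decision
          (fun z hz => ⟨fun he => G.acyclic _ (he ▸ hz), hAND0 z _⟩) hDf u (hDX.trans hXu)
      have hD' : (G.boolSCIM).val (fun _ _ => true) default (G.boolSCIM).decision = true := by
        unfold SCIM.val
        erw [SCIM.solve_eq, SCIM.polMech_self]
      have hall' : ∀ v, (G.boolSCIM).val (fun _ _ => true) default v = true :=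
        G.bool_true _ default (fun z hz => (G.boolSCIM).polMech_ne _ hz) hD'
      have hEU' : (G.boolSCIM).EU (fun _ _ => true) = G.utility.card := by
        erw [G.boolSCIM_EU, G.boolSCIM_totUtil_true _ hall']
      have hEU : (G.boolSCIM).EU π < G.utility.card := by
        rw [G.boolSCIM_EU]
        exact G.boolSCIM_totUtil_lt _ hu hu_false
      have hle := hopt (fun _ _ => true)
      rw [hEU'] at hle
      exact absurd (lt_of_le_of_lt hle hEU) (lt_irrefl _)
    have hall : ∀ v, (G.boolSCIM).val π default v = true :=
      G.bool_true _ default hAND0 hDtrue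
    refine ⟨(G.boolSCIM).ctx π default, ?_, false, ?_⟩
    · rw [G.boolSCIM_ctxProb]; norm_num
    · rw [G.boolSCIM_condExp, G.boolSCIM_condExp]
      -- Under do(D = false), X is false.
      have hx : (G.boolSCIM).valDo π
          ((G.boolSCIM).single (G.boolSCIM).decision false) default X = false := by
        have hDf : (G.boolSCIM).valDo π
            ((G.boolSCIM).single (G.boolSCIM).decision false) default
            (G.boolSCIM).decision = false := by
          unfold SCIM.valDo
          erw [SCIM.solve_eq, SCIM.doMech_single_self]
        refine G.bool_false _ default (G.boolSCIM).decision ?_ hDf X hDX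
        intro z hz
        have hzd : z ≠ (G.boolSCIM).decision := fun he => G.acyclic _ (he ▸ hz)
        exact ⟨hzd, by erw [SCIM.doMech_single_ne _ _ _ hzd, SCIM.polMech_ne _ π hzd]⟩
      unfold SCIM.nestedU
      rw [hx]
      -- Under do(X = false), the utility node u is false.
      have hu_false2 : (G.boolSCIM).valDo π ((G.boolSCIM).single X false) default u
          = false := by
        have hXf : (G.boolSCIM).valDo π ((G.boolSCIM).single X false) default X = false := by
          unfold SCIM.valDo
          erw [SCIM.solve_eq, SCIM.doMech_single_self]
        refine G.bool_false _ default X ?_ hXf u hXu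
        intro z hz
        have hzX : z ≠ X := fun he => G.acyclic _ (he ▸ hz)
        have hzD : z ≠ (G.boolSCIM).decision := by
          intro he
          exact G.acyclic X (Relation.TransGen.trans_left (he ▸ hz) hDX)
        exact ⟨hzD, by erw [SCIM.doMech_single_ne _ _ _ hzX, SCIM.polMech_ne _ π hzD]⟩
      rw [G.boolSCIM_totUtil_true _ hall]
      exact ne_of_lt (G.boolSCIM_totUtil_lt _ hu hu_false2)
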